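/- Let ψ¹ be a monotone α₁-CRS for F¹ with respect to q and ψ² a monotone α₂-CRS for F² with respect to q, where F¹ and F² are downward-closed families of vectors. Define the randomized mapping ψ by: given a vector v, draw u₁ ∼ ψ¹(v) and u₂ ∼ ψ²(v) independently, and output the vector w with w(i) = v(i) if u₁(i) = v(i) and u₂(i) = v(i), and w(i) = 0 otherwise. Then ψ is a monotone (α₁·α₂)-CRS for F¹ ∩ F² with respect to q. -/

import Mathlib

open Finset

/-- A vector assigns to each item in `I` a state in `{0, 1, …, B}`. -/
abbrev Vec (I : Type) (B : ℕ) := I → Fin (B + 1)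

section CRS

variable {I : Type} [Fintype I] [DecidableEq I] {B : ℕ}

/-- `q` assigns to each item a probability distribution on `{0, 1, …, B}`. -/
def IsDist (q : I → Fin (B + 1) → ℝ) : Prop :=
  (∀ i j, 0 ≤ q i j) ∧ ∀ i, ∑ j, q i j = 1

/-- Probability of the vector `v` when coordinates are drawn independently from `q`. -/
def vecProb (q : I → Fin (B + 1) → ℝ) (v : Vec I B) : ℝ := ∏ i, q i (v i)

/-- A randomized mapping: for each vector `v`, `ψ v` is a probability distribution on vectors. -/
def IsKernel (ψ : Vec I B → Vec I B → ℝ) : Prop :=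
  (∀ v u, 0 ≤ ψ v u) ∧ ∀ v, ∑ u, ψ v u = 1

/-- A family of vectors is downward closed. -/
def DownwardClosed (F : Set (Vec I B)) : Prop :=
  ∀ ⦃u v : Vec I B⦄, u ≤ v → v ∈ F → u ∈ F

/-- `ψ` is an `α`-contention resolution scheme for `F` with respect to `q`:
it is a randomized mapping whose output always lies in `F` and keeps each coordinate
of the input or zeroes it out, and each nonzero coordinate value is kept with
(unconditional joint) probability at least `α` times its occurrence probability. -/
def IsCRS (q : I → Fin (B + 1) → ℝ) (F : Set (Vec I B)) (α : ℝ)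
    (ψ : Vec I B → Vec I B → ℝ) : Prop :=
  IsKernel ψ ∧
  (∀ v u, ψ v u ≠ 0 → u ∈ F ∧ ∀ i, u i = 0 ∨ u i = v i) ∧
  ∀ (i : I) (j : Fin (B + 1)), j ≠ 0 →
    ∑ v : Vec I B, ∑ u : Vec I B,
        (if v i = j ∧ u i = j then vecProb q v * ψ v u else 0) ≥
      α * ∑ v : Vec I B, (if v i = j then vecProb q v else 0)

/-- A CRS is monotone if the probability of keeping coordinate `i` does not increase
when the input vector grows (keeping coordinate `i` fixed). -/
def MonotoneCRS (ψ : Vec I B → Vec I B → ℝ) : Prop :=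
  ∀ (u v : Vec I B) (i : I), u ≤ v → u i = v i →
    ∑ w : Vec I B, (if w i = u i then ψ u w else 0) ≥
      ∑ w : Vec I B, (if w i = v i then ψ v w else 0)

end CRS

/-- The combined randomized mapping: given `v`, draw `u₁ ∼ ψ₁ v` and `u₂ ∼ ψ₂ v`
independently and output the vector keeping `v i` exactly when both `u₁` and `u₂` keep it. -/
def combineKernel {I : Type} [Fintype I] [DecidableEq I] {B : ℕ}
    (ψ₁ ψ₂ : Vec I B → Vec I B → ℝ) (v w : Vec I B) : ℝ :=
  ∑ u₁ : Vec I B, ∑ u₂ : Vec I B,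
    if w = (fun i => if u₁ i = v i ∧ u₂ i = v i then v i else (0 : Fin (B + 1)))
      then ψ₁ v u₁ * ψ₂ v u₂ else 0

section AuxCRS

variable {I : Type} [Fintype I] [DecidableEq I] {B : ℕ}

/-- keep probability of coordinate `i`. -/
def keepProb (ψ : Vec I B → Vec I B → ℝ) (i : I) (v : Vec I B) : ℝ :=
  ∑ w : Vec I B, if w i = v i then ψ v w else 0

lemma keepProb_nonneg {ψ : Vec I B → Vec I B → ℝ} (hK : IsKernel ψ) (i : I) (v : Vec I B) :
    0 ≤ keepProb ψ i v :=
  Finset.sum_nonneg fun w _ => by split <;> [exact hK.1 v w; exact le_rfl]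

lemma ite_sum_zero {c : Prop} [Decidable c] {γ : Type} [Fintype γ] (f : γ → ℝ) :
    (if c then ∑ x, f x else 0) = ∑ x, if c then f x else 0 := by
  split <;> simp

lemma combine_keep (ψ₁ ψ₂ : Vec I B → Vec I B → ℝ) (hK₁ : IsKernel ψ₁) (hK₂ : IsKernel ψ₂)
    (i : I) (v : Vec I B) :
    keepProb (combineKernel ψ₁ ψ₂) i v =
      if v i = 0 then 1 else keepProb ψ₁ i v * keepProb ψ₂ i v := by
  unfold keepProb combineKernel
  simp only [_root_.ite_sum_zero]
  rw [Finset.sum_comm]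
  rw [Finset.sum_congr rfl (fun u₁ _ => Finset.sum_comm)]
  have key : ∀ u₁ u₂ : Vec I B,
      (∑ w : Vec I B, if w i = v i then
        (if w = (fun k => if u₁ k = v k ∧ u₂ k = v k then v k else (0 : Fin (B+1)))
          then ψ₁ v u₁ * ψ₂ v u₂ else 0) else 0)
      = if ((if u₁ i = v i ∧ u₂ i = v i then v i else (0 : Fin (B+1))) = v i)
          then ψ₁ v u₁ * ψ₂ v u₂ else 0 := by
    intro u₁ u₂
    rw [Finset.sum_eq_single (fun k => if u₁ k = v k ∧ u₂ k = v k then v k else (0 : Fin (B+1)))]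
    · by_cases h : (if u₁ i = v i ∧ u₂ i = v i then v i else (0 : Fin (B+1))) = v i <;> simp [h]
    · intro w _ hw; simp [hw]
    · simp
  simp only [key]
  by_cases hv : v i = 0
  · simp only [hv]
    have : ∀ u₁ u₂ : Vec I B,
        ((if u₁ i = (0:Fin (B+1)) ∧ u₂ i = 0 then (0:Fin (B+1)) else 0) = 0) := by
      intro u₁ u₂; split <;> rfl
    simp only [this, if_true, if_pos]
    rw [← Finset.sum_mul_sum, hK₁.2, hK₂.2, mul_one]
  · rw [if_neg hv]
    have : ∀ u₁ u₂ : Vec I B,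
        ((if u₁ i = v i ∧ u₂ i = v i then v i else (0 : Fin (B+1))) = v i)
          ↔ (u₁ i = v i ∧ u₂ i = v i) := by
      intro u₁ u₂; constructor
      · intro h; by_contra hc; rw [if_neg hc] at h; exact hv h.symm
      · intro h; rw [if_pos h]
    simp only [this]
    rw [Finset.sum_mul_sum]
    congr 1; ext u₁; congr 1; ext u₂
    by_cases h1 : u₁ i = v i <;> by_cases h2 : u₂ i = v i <;> simp [h1, h2]

lemma marg_eq (q : I → Fin (B + 1) → ℝ) (ψ : Vec I B → Vec I B → ℝ) (i : I) (j : Fin (B + 1)) :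
    (∑ v : Vec I B, ∑ u : Vec I B,
        (if v i = j ∧ u i = j then vecProb q v * ψ v u else 0)) =
      ∑ v : Vec I B, (if v i = j then vecProb q v * keepProb ψ i v else 0) := by
  refine Finset.sum_congr rfl fun v _ => ?_
  by_cases hv : v i = j
  · simp only [keepProb, hv, eq_self_iff_true, true_and, if_true, Finset.mul_sum,
      mul_ite, mul_zero]
  · simp [hv]

lemma fkg_core (q : I → Fin (B + 1) → ℝ) (hq0 : ∀ i j, 0 ≤ q i j)
    (i : I) (j : Fin (B + 1))
    (f g : Vec I B → ℝ) (hf0 : ∀ v, 0 ≤ f v) (hg0 : ∀ v, 0 ≤ g v)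
    (hf : Antitone f) (hg : Antitone g) :
    (∑ v : Vec I B, (if v i = j then vecProb q v else 0) * f v) *
      (∑ v : Vec I B, (if v i = j then vecProb q v else 0) * g v) ≤
    (∑ v : Vec I B, (if v i = j then vecProb q v else 0)) *
      ∑ v : Vec I B, (if v i = j then vecProb q v else 0) * (f v * g v) := by
  set μ : Vec I B → ℝ := fun v => if v i = j then vecProb q v else 0 with hμ
  have hμ0 : ∀ v, 0 ≤ μ v := fun v => by
    simp only [hμ]; split
    · exact Finset.prod_nonneg fun k _ => hq0 k _
    · exact le_rfl
  have hsup : ∀ a b : Vec I B, μ a * μ b ≤ μ (a ⊓ b) * μ (a ⊔ b) := by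
    intro a b
    by_cases ha : a i = j
    · by_cases hb : b i = j
      · have hinf : (a ⊓ b) i = j := by
          show a i ⊓ b i = j; rw [ha, hb, inf_idem]
        have hsupi : (a ⊔ b) i = j := by
          show a i ⊔ b i = j; rw [ha, hb, sup_idem]
        simp only [hμ, ha, hb, hinf, hsupi, if_true]
        apply le_of_eq
        unfold vecProb
        rw [← Finset.prod_mul_distrib, ← Finset.prod_mul_distrib]
        refine Finset.prod_congr rfl fun k _ => ?_
        show q k (a k) * q k (b k) = q k (a k ⊓ b k) * q k (a k ⊔ b k)
        rcases le_total (a k) (b k) with h | h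
        · rw [inf_eq_left.2 h, sup_eq_right.2 h]
        · rw [inf_eq_right.2 h, sup_eq_left.2 h, mul_comm]
      · rw [show μ b = 0 from if_neg hb, mul_zero]
        exact mul_nonneg (hμ0 _) (hμ0 _)
    · rw [show μ a = 0 from if_neg ha, zero_mul]
      exact mul_nonneg (hμ0 _) (hμ0 _)
  have key := fkg (α := (Vec I B)ᵒᵈ)
    (fun a => f (OrderDual.ofDual a)) (fun a => g (OrderDual.ofDual a))
    (fun a => μ (OrderDual.ofDual a))
    (fun a => hμ0 _) (fun a => hf0 _) (fun a => hg0 _)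
    (hf.dual_left) (hg.dual_left)
    (fun a b => by
      refine (hsup (OrderDual.ofDual a) (OrderDual.ofDual b)).trans_eq ?_
      show μ _ * μ _ = μ (OrderDual.ofDual (a ⊓ b)) * μ (OrderDual.ofDual (a ⊔ b))
      simp only [_root_.ofDual_inf, _root_.ofDual_sup]
      exact mul_comm _ _)
  rw [Equiv.sum_comp (OrderDual.ofDual) (fun v => μ v * f v),
      Equiv.sum_comp (OrderDual.ofDual) (fun v => μ v * g v),
      Equiv.sum_comp (OrderDual.ofDual) (fun v => μ v),
      Equiv.sum_comp (OrderDual.ofDual) (fun v => μ v * (f v * g v))] at key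
  exact key

end AuxCRS

/-- If `ψ₁` is a monotone `α₁`-CRS for `F₁` and `ψ₂` is a monotone `α₂`-CRS for `F₂`
with respect to `q`, then their combination is a monotone `α₁ * α₂`-CRS for `F₁ ∩ F₂`
with respect to `q`. -/
theorem combineKernel_isCRS {I : Type} [Fintype I] [DecidableEq I] {B : ℕ}
    (q : I → Fin (B + 1) → ℝ) (hq : IsDist q)
    (F₁ F₂ : Set (Vec I B)) (hdc₁ : DownwardClosed F₁) (hdc₂ : DownwardClosed F₂)
    (α₁ α₂ : ℝ) (hα₁ : α₁ ∈ Set.Icc (0 : ℝ) 1) (hα₂ : α₂ ∈ Set.Icc (0 : ℝ) 1)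
    (ψ₁ ψ₂ : Vec I B → Vec I B → ℝ)
    (h₁ : IsCRS q F₁ α₁ ψ₁) (hm₁ : MonotoneCRS ψ₁)
    (h₂ : IsCRS q F₂ α₂ ψ₂) (hm₂ : MonotoneCRS ψ₂) :
    IsCRS q (F₁ ∩ F₂) (α₁ * α₂) (combineKernel ψ₁ ψ₂) ∧
      MonotoneCRS (combineKernel ψ₁ ψ₂) := by
  obtain ⟨hK₁, hsupp₁, hmarg₁⟩ := h₁
  obtain ⟨hK₂, hsupp₂, hmarg₂⟩ := h₂
  -- the combination is a kernel
  have hKc : IsKernel (combineKernel ψ₁ ψ₂) := by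
    constructor
    · intro v u
      refine Finset.sum_nonneg fun u₁ _ => Finset.sum_nonneg fun u₂ _ => ?_
      split
      · exact mul_nonneg (hK₁.1 v u₁) (hK₂.1 v u₂)
      · exact le_rfl
    · intro v
      unfold combineKernel
      rw [Finset.sum_comm]
      rw [Finset.sum_congr rfl (fun u₁ _ => Finset.sum_comm)]
      have key : ∀ u₁ u₂ : Vec I B,
          (∑ w : Vec I B, if w = (fun k => if u₁ k = v k ∧ u₂ k = v k then v k
              else (0 : Fin (B+1))) then ψ₁ v u₁ * ψ₂ v u₂ else 0) = ψ₁ v u₁ * ψ₂ v u₂ := by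
        intro u₁ u₂; simp [Finset.sum_ite_eq']
      simp only [key]
      rw [← Finset.sum_mul_sum, hK₁.2, hK₂.2, mul_one]
  -- antitone keep-probabilities after pinning coordinate i to j
  refine ⟨⟨hKc, ?_, ?_⟩, ?_⟩
  · -- support condition
    intro v w hw
    unfold combineKernel at hw
    obtain ⟨u₁, -, h1⟩ := Finset.exists_ne_zero_of_sum_ne_zero hw
    obtain ⟨u₂, -, h2⟩ := Finset.exists_ne_zero_of_sum_ne_zero h1
    by_cases hwe : w = (fun k => if u₁ k = v k ∧ u₂ k = v k then v k else (0 : Fin (B+1)))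
    case neg => rw [if_neg hwe] at h2; exact absurd rfl h2
    rw [if_pos hwe] at h2
    obtain ⟨hF1, -⟩ := hsupp₁ v u₁ (left_ne_zero_of_mul h2)
    obtain ⟨hF2, -⟩ := hsupp₂ v u₂ (right_ne_zero_of_mul h2)
    have hle1 : w ≤ u₁ := by
      intro k; rw [hwe]; dsimp only
      split
      · next h => exact le_of_eq h.1.symm
      · exact Fin.zero_le _
    have hle2 : w ≤ u₂ := by
      intro k; rw [hwe]; dsimp only
      split
      · next h => exact le_of_eq h.2.symm
      · exact Fin.zero_le _
    refine ⟨⟨hdc₁ hle1 hF1, hdc₂ hle2 hF2⟩, fun k => ?_⟩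
    rw [hwe]; dsimp only
    split
    · exact Or.inr rfl
    · exact Or.inl rfl
  · -- the marginal inequality, via the FKG inequality
    intro i j hj
    rw [ge_iff_le, marg_eq]
    have H₁ := hmarg₁ i j hj
    rw [ge_iff_le, marg_eq] at H₁
    have H₂ := hmarg₂ i j hj
    rw [ge_iff_le, marg_eq] at H₂
    set f : Vec I B → ℝ := fun v => keepProb ψ₁ i (Function.update v i j) with hfdef
    set g : Vec I B → ℝ := fun v => keepProb ψ₂ i (Function.update v i j) with hgdef
    have hf0 : ∀ v, 0 ≤ f v := fun v => keepProb_nonneg hK₁ i _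
    have hg0 : ∀ v, 0 ≤ g v := fun v => keepProb_nonneg hK₂ i _
    have hupd : ∀ a b : Vec I B, a ≤ b →
        Function.update a i j ≤ Function.update b i j := by
      intro a b hab k
      by_cases hk : k = i
      · subst hk; rw [Function.update_self, Function.update_self]
      · rw [Function.update_of_ne hk, Function.update_of_ne hk]; exact hab k
    have hfa : Antitone f := by
      intro a b hab
      have := hm₁ (Function.update a i j) (Function.update b i j) i (hupd a b hab)
        (by rw [Function.update_self, Function.update_self])
      exact this
    have hga : Antitone g := by
      intro a b hab
      have := hm₂ (Function.update a i j) (Function.update b i j) i (hupd a b hab)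
        (by rw [Function.update_self, Function.update_self])
      exact this
    have hB₁ : ∀ v : Vec I B, (if v i = j then vecProb q v * keepProb ψ₁ i v else 0)
        = (if v i = j then vecProb q v else 0) * f v := by
      intro v
      by_cases hv : v i = j
      · rw [if_pos hv, if_pos hv, hfdef]
        dsimp only
        rw [← hv, Function.update_eq_self]
      · simp [hv]
    have hB₂ : ∀ v : Vec I B, (if v i = j then vecProb q v * keepProb ψ₂ i v else 0)
        = (if v i = j then vecProb q v else 0) * g v := by
      intro v
      by_cases hv : v i = j
      · rw [if_pos hv, if_pos hv, hgdef]
        dsimp only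
        rw [← hv, Function.update_eq_self]
      · simp [hv]
    have hA : ∀ v : Vec I B,
        (if v i = j then vecProb q v * keepProb (combineKernel ψ₁ ψ₂) i v else 0)
        = (if v i = j then vecProb q v else 0) * (f v * g v) := by
      intro v
      by_cases hv : v i = j
      · rw [if_pos hv, if_pos hv, combine_keep ψ₁ ψ₂ hK₁ hK₂ i v,
          if_neg (show ¬ v i = 0 from by rw [hv]; exact hj), hfdef, hgdef]
        dsimp only
        rw [← hv, Function.update_eq_self]
      · simp [hv]
    rw [Finset.sum_congr rfl (fun v _ => hA v)]
    rw [Finset.sum_congr rfl (fun v _ => hB₁ v)] at H₁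
    rw [Finset.sum_congr rfl (fun v _ => hB₂ v)] at H₂
    set S := ∑ v : Vec I B, (if v i = j then vecProb q v else 0) with hSdef
    have hS0 : 0 ≤ S := Finset.sum_nonneg fun v _ => by
      split
      · exact Finset.prod_nonneg fun k _ => hq.1 k _
      · exact le_rfl
    have core := fkg_core q hq.1 i j f g hf0 hg0 hfa hga
    rw [← hSdef] at core
    rcases eq_or_lt_of_le hS0 with hS | hS
    · rw [← hS, mul_zero]
      refine Finset.sum_nonneg fun v _ => ?_
      refine mul_nonneg ?_ (mul_nonneg (hf0 v) (hg0 v))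
      split
      · exact Finset.prod_nonneg fun k _ => hq.1 k _
      · exact le_rfl
    · have h1nn : 0 ≤ ∑ v : Vec I B, (if v i = j then vecProb q v else 0) * f v :=
        le_trans (mul_nonneg hα₁.1 hS0) H₁
      have hprod : (α₁ * S) * (α₂ * S) ≤
          (∑ v : Vec I B, (if v i = j then vecProb q v else 0) * f v) *
          (∑ v : Vec I B, (if v i = j then vecProb q v else 0) * g v) :=
        mul_le_mul H₁ H₂ (mul_nonneg hα₂.1 hS0) h1nn
      have hchain := hprod.trans core
      nlinarith [hchain, hS]
  · -- monotonicity
    intro u v i huv hui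
    rw [ge_iff_le]
    show keepProb (combineKernel ψ₁ ψ₂) i v ≤ keepProb (combineKernel ψ₁ ψ₂) i u
    rw [combine_keep ψ₁ ψ₂ hK₁ hK₂ i u, combine_keep ψ₁ ψ₂ hK₁ hK₂ i v]
    by_cases h0 : v i = 0
    · have hu0 : u i = 0 := hui.trans h0
      rw [if_pos h0, if_pos hu0]
    · have hu0 : ¬ u i = 0 := by rw [hui]; exact h0
      rw [if_neg h0, if_neg hu0]
      have a1 : keepProb ψ₁ i v ≤ keepProb ψ₁ i u := hm₁ u v i huv hui
      have a2 : keepProb ψ₂ i v ≤ keepProb ψ₂ i u := hm₂ u v i huv hui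
      exact mul_le_mul a1 a2 (keepProb_nonneg hK₂ i v) (keepProb_nonneg hK₁ i u)
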